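/- arXiv:1610.00238 — 2 statements merged into one kernel-verified Lean document; each statement's English description precedes it below -/
import Mathlib

section
/- Let m ≥ 2, n ≥ 2, and let f be a maximal IC-coloring of K_{1(n),m} with vertices listed as u_1, …, u_{m+n} so that f(u_i) < f(u_{i+1}) for all i; set f_i = f(u_1) + ⋯ + f(u_i). Then for every pair (i, j) with 1 ≤ i < j ≤ m+n, f_j ≤ 2^{j−i}(f_i + 1) − 1. -/
/-- The join `H₀ ∨ H₁` of two graphs: all edges of `H₀`, all edges of `H₁`, and all
pairs with one endpoint in each. -/
def graphJoin {α β : Type*} (G : SimpleGraph α) (H : SimpleGraph β) :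
    SimpleGraph (α ⊕ β) where
  Adj x y :=
    match x, y with
    | Sum.inl a, Sum.inl b => G.Adj a b
    | Sum.inr a, Sum.inr b => H.Adj a b
    | Sum.inl _, Sum.inr _ => True
    | Sum.inr _, Sum.inl _ => True
  symm := by
    constructor
    rintro (a | a) (b | b) h
    · exact G.adj_symm h
    · trivial
    · trivial
    · exact H.adj_symm h
  loopless := by
    constructor
    rintro (a | a) h
    · exact G.irrefl h
    · exact H.irrefl h

/-- A coloring `f : V(G) → ℕ` (positive-valued) is an IC-coloring if every integer
`k` with `1 ≤ k ≤ f(G)` is the `f`-sum of some nonempty vertex subset inducing a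
connected subgraph. -/
def IsICColoring {α : Type*} [Fintype α] (G : SimpleGraph α) (f : α → ℕ) : Prop :=
  (∀ v, 0 < f v) ∧
    ∀ k : ℕ, 1 ≤ k → k ≤ ∑ v, f v →
      ∃ S : Finset α, S.Nonempty ∧ (G.induce (S : Set α)).Connected ∧
        ∑ v ∈ S, f v = k

/-- The IC-index `M(G)`: the maximum of `f(G)` over all IC-colorings `f` of `G`. -/
noncomputable def ICIndex {α : Type*} [Fintype α] (G : SimpleGraph α) : ℕ :=
  sSup {t | ∃ f : α → ℕ, IsICColoring G f ∧ ∑ v, f v = t}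

/-- `K_{1(n),m} = O_m ∨ K_n`: the complete `(n+1)`-partite graph with `n` parts of
size one and one part (`V₀ = Fin m`, the left summand) of size `m`. -/
def K1nm (m n : ℕ) : SimpleGraph (Fin m ⊕ Fin n) :=
  graphJoin (⊥ : SimpleGraph (Fin m)) (⊤ : SimpleGraph (Fin n))

/-- Let `m, n ≥ 2` and `f` a maximal IC-coloring of `K_{1(n),m}`,
with vertices listed as `u 1, …, u (m+n)` so that `f` is strictly increasing along
the list; write `fᵢ = ∑_{k=1}^{i} f (u k)`.  Then `f_j ≤ 2^{j−i}(fᵢ + 1) − 1` for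
all `1 ≤ i < j ≤ m + n`. -/
theorem stmt_11 (m n : ℕ) (hm : 2 ≤ m) (hn : 2 ≤ n)
    (f : Fin m ⊕ Fin n → ℕ) (hf : IsICColoring (K1nm m n) f)
    (hmax : ∑ v, f v = ICIndex (K1nm m n))
    (u : ℕ → Fin m ⊕ Fin n) (hu : Set.BijOn u (Set.Icc 1 (m + n)) Set.univ)
    (hmono : ∀ i, 1 ≤ i → i + 1 ≤ m + n → f (u i) < f (u (i + 1))) :
    ∀ i j, 1 ≤ i → i < j → j ≤ m + n →
      ∑ k ∈ Finset.Icc 1 j, f (u k) ≤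
        2 ^ (j - i) * ((∑ k ∈ Finset.Icc 1 i, f (u k)) + 1) - 1 := by
  have hpos := hf.1
  have htot : ∑ k ∈ Finset.Icc 1 (m + n), f (u k) = ∑ v, f v := by
    apply Finset.sum_bij (fun k _ => u k)
    · intro a ha; exact Finset.mem_univ _
    · intro a ha b hb h
      exact hu.injOn (by simpa using ha) (by simpa using hb) h
    · intro v _
      obtain ⟨k, hk, hkv⟩ := hu.surjOn (Set.mem_univ v)
      exact ⟨k, by simpa using hk, hkv⟩
    · intros; rfl
  have hmono' : ∀ a b, 1 ≤ a → a ≤ b → b ≤ m + n → f (u a) ≤ f (u b) := by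
    intro a b ha hab
    induction b, hab using Nat.le_induction with
    | base => intro _; exact le_rfl
    | succ b hab ih =>
      intro hb
      exact le_trans (ih (by omega)) (le_of_lt (hmono b (by omega) hb))
  have hstep : ∀ i, 1 ≤ i → i + 1 ≤ m + n →
      ∑ k ∈ Finset.Icc 1 (i + 1), f (u k) ≤
        2 * ((∑ k ∈ Finset.Icc 1 i, f (u k)) + 1) - 1 := by
    intro i hi hi1
    have hsplit : ∑ k ∈ Finset.Icc 1 (i + 1), f (u k)
        = (∑ k ∈ Finset.Icc 1 i, f (u k)) + f (u (i + 1)) := by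
      rw [Finset.sum_Icc_succ_top (by omega)]
    have hle : (∑ k ∈ Finset.Icc 1 i, f (u k)) + 1 ≤ ∑ v, f v := by
      rw [← htot]
      calc (∑ k ∈ Finset.Icc 1 i, f (u k)) + 1
          ≤ ∑ k ∈ Finset.Icc 1 (i + 1), f (u k) := by
            rw [hsplit]; exact Nat.add_le_add_left (hpos _) _
        _ ≤ ∑ k ∈ Finset.Icc 1 (m + n), f (u k) :=
            Finset.sum_le_sum_of_subset
              (Finset.Icc_subset_Icc le_rfl hi1)
    obtain ⟨S, hSne, hScon, hSsum⟩ := hf.2 ((∑ k ∈ Finset.Icc 1 i, f (u k)) + 1)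
      (by omega) hle
    have hex : ∃ t, i < t ∧ t ≤ m + n ∧ u t ∈ S := by
      by_contra h
      push_neg at h
      have hsub : S ⊆ (Finset.Icc 1 i).image u := by
        intro v hv
        obtain ⟨k, hk, hkv⟩ := hu.surjOn (Set.mem_univ v)
        simp only [Set.mem_Icc] at hk
        have hki : k ≤ i := by
          by_contra hki
          exact (h k (by omega) hk.2) (hkv ▸ hv)
        exact Finset.mem_image.mpr ⟨k, Finset.mem_Icc.mpr ⟨hk.1, hki⟩, hkv⟩
      have h1 : ∑ v ∈ S, f v ≤ ∑ v ∈ (Finset.Icc 1 i).image u, f v :=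
        Finset.sum_le_sum_of_subset hsub
      rw [Finset.sum_image (fun a ha b hb hab => hu.injOn
          (Set.mem_Icc.mpr (by have := Finset.mem_Icc.mp ha; omega))
          (Set.mem_Icc.mpr (by have := Finset.mem_Icc.mp hb; omega))
          hab)] at h1
      omega
    obtain ⟨t, hti, htm, htS⟩ := hex
    have h1 : f (u (i + 1)) ≤ f (u t) := hmono' (i + 1) t (by omega) (by omega) htm
    have h2 : f (u t) ≤ ∑ v ∈ S, f v :=
      Finset.single_le_sum (fun v _ => Nat.zero_le _) htS
    omega
  intro i j hi hij hjm
  revert hjm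
  induction j, hij using Nat.le_induction with
  | base =>
    intro hjm
    have := hstep i hi hjm
    have h1 : i + 1 - i = 1 := by omega
    rw [h1, pow_one]
    exact this
  | succ j hij ih =>
    intro hjm
    have ihv := ih (by omega)
    have hs := hstep j (by omega) hjm
    have hp : 1 ≤ 2 ^ (j - i) * ((∑ k ∈ Finset.Icc 1 i, f (u k)) + 1) :=
      Nat.one_le_iff_ne_zero.mpr (by positivity)
    have he : 2 ^ (j + 1 - i) = 2 * 2 ^ (j - i) := by
      rw [show j + 1 - i = (j - i) + 1 by omega, pow_succ]; ring
    calc ∑ k ∈ Finset.Icc 1 (j + 1), f (u k)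
        ≤ 2 * ((∑ k ∈ Finset.Icc 1 j, f (u k)) + 1) - 1 := hs
      _ ≤ 2 * (2 ^ (j - i) * ((∑ k ∈ Finset.Icc 1 i, f (u k)) + 1)) - 1 := by
          have : (∑ k ∈ Finset.Icc 1 j, f (u k)) + 1
              ≤ 2 ^ (j - i) * ((∑ k ∈ Finset.Icc 1 i, f (u k)) + 1) := by omega
          exact Nat.sub_le_sub_right (Nat.mul_le_mul_left 2 this) 1
      _ = 2 ^ (j + 1 - i) * ((∑ k ∈ Finset.Icc 1 i, f (u k)) + 1) - 1 := by
          rw [he]; ring_nf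
end

section
/- Let m ≥ 2, n ≥ 2, and let f be a maximal IC-coloring of K_{1(n),m} with vertices listed as u_1, …, u_{m+n} so that f(u_i) < f(u_{i+1}) for all i. Set s_0 = 0, s_i = f(u_i), and r_i = s_i − ∑_{j=0}^{i−1} s_j for 1 ≤ i ≤ m+n, and let k_0 = max{ j : u_j ∈ V_0 }. If r_i ≤ 0 for every index i with u_i ∈ V_0 \ {u_{k_0}}, then f(K_{1(n),m}) ≤ 2^{m+n} − 2^m + 1. -/
lemma geom2 (t : ℕ) : ∑ i ∈ Finset.range t, (2:ℤ)^i = 2^t - 1 := by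
  induction t with
  | zero => simp
  | succ n ih => rw [Finset.sum_range_succ, ih]; ring

lemma pow_sum_lower (B : Finset ℕ) (h : ∀ e ∈ B, 1 ≤ e) :
    (2:ℤ)^(B.card + 1) - 2 ≤ ∑ e ∈ B, (2:ℤ)^e := by
  induction B using Finset.strongInduction with
  | _ B ih =>
    rcases B.eq_empty_or_nonempty with rfl | hne
    · simp
    · have hM := B.max'_mem hne
      set M := B.max' hne with hMdef
      have hsub : B.erase M ⊂ B := Finset.erase_ssubset hM
      have hcard : (B.erase M).card = B.card - 1 := Finset.card_erase_of_mem hM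
      have hle : B.card ≤ M := by
        have hBsub : B ⊆ Finset.Icc 1 M :=
          fun x hx => Finset.mem_Icc.mpr ⟨h x hx, Finset.le_max' B x hx⟩
        calc B.card ≤ (Finset.Icc 1 M).card := Finset.card_le_card hBsub
          _ = M := by rw [Nat.card_Icc]; omega
      have ihe := ih (B.erase M) hsub (fun e he => h e (Finset.mem_of_mem_erase he))
      have hc1 : 1 ≤ B.card := Finset.card_pos.mpr hne
      have hsplit : ∑ e ∈ B, (2:ℤ)^e = 2^M + ∑ e ∈ B.erase M, 2^e :=
        (Finset.add_sum_erase _ _ hM).symm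
      have hpow : (2:ℤ)^B.card ≤ 2^M := pow_le_pow_right₀ (by norm_num) hle
      have hce : (B.erase M).card + 1 = B.card := by omega
      rw [hce] at ihe
      rw [hsplit]
      have : (2:ℤ)^(B.card + 1) = 2 * 2^B.card := by ring
      linarith
/-- Setting as in Statement 13, with `V₀` the size-`m` partite set
(the left summand) and `k₀ = max { j : u j ∈ V₀ }`: if `r i ≤ 0` for every index `i`
with `u i ∈ V₀ \ {u k₀}`, then `f(K_{1(n),m}) ≤ 2^{m+n} − 2^m + 1`. -/
theorem stmt_14 (m n : ℕ) (hm : 2 ≤ m) (hn : 2 ≤ n)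
    (f : Fin m ⊕ Fin n → ℕ) (hf : IsICColoring (K1nm m n) f)
    (hmax : ∑ v, f v = ICIndex (K1nm m n))
    (u : ℕ → Fin m ⊕ Fin n) (hu : Set.BijOn u (Set.Icc 1 (m + n)) Set.univ)
    (hmono : ∀ i, 1 ≤ i → i + 1 ≤ m + n → f (u i) < f (u (i + 1)))
    (s r : ℕ → ℤ) (hs0 : s 0 = 0)
    (hs : ∀ i, 1 ≤ i → i ≤ m + n → s i = f (u i))
    (hr : ∀ i, 1 ≤ i → i ≤ m + n → r i = s i - ∑ j ∈ Finset.range i, s j)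
    (k₀ : ℕ) (hk₀mem : 1 ≤ k₀ ∧ k₀ ≤ m + n ∧ (u k₀).isLeft = true)
    (hk₀max : ∀ j, 1 ≤ j → j ≤ m + n → (u j).isLeft = true → j ≤ k₀)
    (hneg : ∀ i, 1 ≤ i → i ≤ m + n → (u i).isLeft = true → i ≠ k₀ → r i ≤ 0) :
    ∑ v, f v ≤ 2 ^ (m + n) - 2 ^ m + 1 := by
  set N := m + n with hN
  obtain ⟨hfpos, hfIC⟩ := hf
  have hN1 : 1 ≤ N := by omega
  -- monotonicity along the chain
  have hmono' : ∀ j, j ≤ N → ∀ i, 1 ≤ i → i ≤ j → f (u i) ≤ f (u j) := by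
    intro j
    induction j with
    | zero => omega
    | succ t ih =>
      intro hjN i hi hij
      rcases Nat.lt_or_ge i (t+1) with h | h
      · exact (ih (by omega) i hi (by omega)).trans (hmono t (by omega) (by omega)).le
      · have : i = t + 1 := by omega
        rw [this]
  -- image of Icc 1 N under u is everything
  have hinj : ∀ x ∈ Finset.Icc 1 N, ∀ y ∈ Finset.Icc 1 N, u x = u y → x = y := by
    intro x hx y hy hxy
    have hx' := Finset.mem_Icc.mp hx
    have hy' := Finset.mem_Icc.mp hy
    exact hu.injOn ⟨hx'.1, hx'.2⟩ ⟨hy'.1, hy'.2⟩ hxy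
  have hsurj : ∀ v : Fin m ⊕ Fin n, ∃ j, 1 ≤ j ∧ j ≤ N ∧ u j = v := by
    intro v
    obtain ⟨j, hj, hjv⟩ := hu.surjOn (Set.mem_univ v)
    exact ⟨j, hj.1, hj.2, hjv⟩
  have himage : (Finset.Icc 1 N).image u = Finset.univ := by
    ext v
    simp only [Finset.mem_image, Finset.mem_univ, iff_true, Finset.mem_Icc]
    obtain ⟨j, h1, h2, h3⟩ := hsurj v
    exact ⟨j, ⟨h1, h2⟩, h3⟩
  have htot : ∑ v, f v = ∑ j ∈ Finset.Icc 1 N, f (u j) := by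
    rw [← himage, Finset.sum_image hinj]
  -- partial sums in ℕ match partial sums of s
  have hQ : ∀ t, t ≤ N + 1 → ((∑ j ∈ Finset.Ico 1 t, f (u j) : ℕ) : ℤ)
      = ∑ j ∈ Finset.range t, s j := by
    intro t
    induction t with
    | zero => simp
    | succ t ih =>
      intro ht
      rw [Finset.sum_range_succ, ← ih (by omega)]
      rcases Nat.eq_zero_or_pos t with rfl | htpos
      · simp [hs0]
      · rw [Finset.sum_Ico_succ_top htpos, hs t htpos (by omega)]
        push_cast; ring
  -- Claim A: r i ≤ 1 for all i
  have hr1 : ∀ i, 1 ≤ i → i ≤ N → r i ≤ 1 := by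
    intro i hi hiN
    by_contra hcon
    push_neg at hcon
    have hri : r i = s i - ∑ j ∈ Finset.range i, s j := hr i hi hiN
    have hsi : s i = (f (u i) : ℤ) := hs i hi hiN
    have hQi : ((∑ j ∈ Finset.Ico 1 i, f (u j) : ℕ) : ℤ) = ∑ j ∈ Finset.range i, s j :=
      hQ i (by omega)
    set T := ∑ j ∈ Finset.Ico 1 i, f (u j) with hT
    have hfi : T + 2 ≤ f (u i) := by
      have : (T : ℤ) + 2 ≤ (f (u i) : ℤ) := by
        rw [hQi]; omega
      exact_mod_cast this
    have hKle : T + 1 ≤ ∑ v, f v := by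
      rw [htot]
      have hsub : insert i (Finset.Ico 1 i) ⊆ Finset.Icc 1 N := by
        intro x hx
        simp only [Finset.mem_insert, Finset.mem_Ico] at hx
        rw [Finset.mem_Icc]
        omega
      have hni : i ∉ Finset.Ico 1 i := by simp
      calc T + 1 ≤ f (u i) + T := by omega
        _ = ∑ j ∈ insert i (Finset.Ico 1 i), f (u j) := by
            rw [Finset.sum_insert hni]
        _ ≤ ∑ j ∈ Finset.Icc 1 N, f (u j) := Finset.sum_le_sum_of_subset hsub
    obtain ⟨S, hSne, -, hSsum⟩ := hfIC (T + 1) (by omega) hKle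
    by_cases hcase : ∀ v ∈ S, ∃ j, 1 ≤ j ∧ j < i ∧ u j = v
    · -- S sits inside the first i-1 vertices: sum too small
      have hSsub : S ⊆ (Finset.Ico 1 i).image u := by
        intro v hv
        obtain ⟨j, h1, h2, h3⟩ := hcase v hv
        exact Finset.mem_image.mpr ⟨j, Finset.mem_Ico.mpr ⟨h1, h2⟩, h3⟩
      have hinj' : ∀ x ∈ Finset.Ico 1 i, ∀ y ∈ Finset.Ico 1 i, u x = u y → x = y := by
        intro x hx y hy
        have hx' := Finset.mem_Ico.mp hx
        have hy' := Finset.mem_Ico.mp hy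
        exact hinj x (Finset.mem_Icc.mpr ⟨hx'.1, by omega⟩) y
          (Finset.mem_Icc.mpr ⟨hy'.1, by omega⟩)
      have : T + 1 ≤ T := by
        calc T + 1 = ∑ v ∈ S, f v := hSsum.symm
          _ ≤ ∑ v ∈ (Finset.Ico 1 i).image u, f v := Finset.sum_le_sum_of_subset hSsub
          _ = T := by rw [Finset.sum_image hinj']
      omega
    · -- S contains a large vertex: sum too big
      push_neg at hcase
      obtain ⟨v, hvS, hv⟩ := hcase
      obtain ⟨j, h1, h2, h3⟩ := hsurj v
      have hij : i ≤ j := by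
        by_contra h
        exact hv j h1 (by omega) h3
      have hfv : T + 2 ≤ f v := by
        rw [← h3]
        exact hfi.trans (hmono' j h2 i hi hij)
      have : f v ≤ T + 1 := by
        rw [← hSsum]
        exact Finset.single_le_sum (fun x _ => Nat.zero_le _) hvS
      omega
  -- recurrence and explicit formula
  have hrec : ∀ t, 1 ≤ t → t ≤ N →
      ∑ j ∈ Finset.range (t+1), s j = 2 * ∑ j ∈ Finset.range t, s j + r t := by
    intro t h1 h2
    rw [Finset.sum_range_succ]
    have := hr t h1 h2
    linarith
  have hformula : ∀ t, 1 ≤ t → t ≤ N →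
      ∑ j ∈ Finset.range (t+1), s j = ∑ i ∈ Finset.Icc 1 t, 2^(t-i) * r i := by
    intro t
    induction t with
    | zero => omega
    | succ t ih =>
      intro h1 h2
      rcases Nat.eq_zero_or_pos t with rfl | htpos
      · have hr1' := hr 1 le_rfl (by omega)
        simp only [Finset.sum_range_succ, Finset.sum_range_one, hs0] at *
        simp [Finset.Icc_self, hr1', hs0]
      · rw [hrec (t+1) (by omega) h2, ih htpos (by omega),
          Finset.sum_Icc_succ_top (by omega : 1 ≤ t + 1)]
        have hcg : ∀ i ∈ Finset.Icc 1 t, (2:ℤ)^(t+1-i) * r i = 2 * (2^(t-i) * r i) := by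
          intro i hi
          have hi' := Finset.mem_Icc.mp hi
          have : t + 1 - i = (t - i) + 1 := by omega
          rw [this, pow_succ]; ring
        rw [Finset.sum_congr rfl hcg, ← Finset.mul_sum]
        simp
  -- the set of "small left" indices
  set L := (Finset.Icc 1 N).filter (fun i => (u i).isLeft = true) with hL
  set A := L.erase k₀ with hA
  have hk₀L : k₀ ∈ L := by
    rw [hL, Finset.mem_filter, Finset.mem_Icc]
    exact ⟨⟨hk₀mem.1, hk₀mem.2.1⟩, hk₀mem.2.2⟩
  have hLimg : L.image u = Finset.univ.filter (fun v => v.isLeft = true) := by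
    ext v
    simp only [Finset.mem_image, Finset.mem_filter, Finset.mem_univ, true_and, hL,
      Finset.mem_Icc]
    constructor
    · rintro ⟨i, ⟨_, h3⟩, rfl⟩; exact h3
    · intro hv
      obtain ⟨j, h1, h2, h3⟩ := hsurj v
      exact ⟨j, ⟨⟨h1, h2⟩, by rw [h3]; exact hv⟩, h3⟩
  have hfiltercard : (Finset.univ.filter (fun v : Fin m ⊕ Fin n => v.isLeft = true)).card
      = m := by
    have : (Finset.univ.filter (fun v : Fin m ⊕ Fin n => v.isLeft = true))
        = Finset.univ.image Sum.inl := by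
      ext v
      cases v <;> simp
    rw [this, Finset.card_image_of_injective _ Sum.inl_injective, Finset.card_univ,
      Fintype.card_fin]
  have hLcard : L.card = m := by
    have hinjL : ∀ x ∈ L, ∀ y ∈ L, u x = u y → x = y := by
      intro x hx y hy
      exact hinj x (Finset.mem_of_mem_filter x hx) y (Finset.mem_of_mem_filter y hy)
    rw [← Finset.card_image_of_injOn hinjL, hLimg, hfiltercard]
  have hAcard : A.card = m - 1 := by
    rw [hA, Finset.card_erase_of_mem hk₀L, hLcard]
  have hAprop : ∀ i ∈ A, 1 ≤ i ∧ i < k₀ ∧ (u i).isLeft = true := by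
    intro i hi
    rw [hA, Finset.mem_erase, hL, Finset.mem_filter, Finset.mem_Icc] at hi
    obtain ⟨hne, ⟨h1, h2⟩, h3⟩ := hi
    have := hk₀max i h1 h2 h3
    exact ⟨h1, by omega, h3⟩
  have hAsub : A ⊆ Finset.Icc 1 N := by
    intro i hi
    exact Finset.mem_of_mem_filter i (Finset.mem_of_mem_erase hi)
  -- bound the big sum
  have hb1 : ∑ i ∈ Finset.Icc 1 N \ A, (2:ℤ)^(N-i) * r i
      ≤ ∑ i ∈ Finset.Icc 1 N \ A, (2:ℤ)^(N-i) := by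
    apply Finset.sum_le_sum
    intro i hi
    have hi' := Finset.mem_Icc.mp (Finset.mem_sdiff.mp hi).1
    exact mul_le_of_le_one_right (pow_nonneg (by norm_num) _) (hr1 i hi'.1 hi'.2)
  have hb2 : ∑ i ∈ A, (2:ℤ)^(N-i) * r i ≤ 0 := by
    apply Finset.sum_nonpos
    intro i hi
    obtain ⟨h1, h2, h3⟩ := hAprop i hi
    have hik : i ≠ k₀ := by omega
    have hiN : i ≤ N := by
      have := Finset.mem_Icc.mp (hAsub hi)
      exact this.2
    exact mul_nonpos_of_nonneg_of_nonpos (pow_nonneg (by norm_num) _)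
      (hneg i h1 hiN h3 hik)
  have hgeo : ∑ i ∈ Finset.Icc 1 N, (2:ℤ)^(N-i) = 2^N - 1 := by
    rw [← geom2 N]
    apply Finset.sum_nbij' (i := fun j => N - j) (j := fun e => N - e)
    · intro a ha
      have := Finset.mem_Icc.mp ha
      rw [Finset.mem_range]; omega
    · intro a ha
      have := Finset.mem_range.mp ha
      rw [Finset.mem_Icc]; omega
    · intro a ha
      have := Finset.mem_Icc.mp ha
      omega
    · intro a ha
      have := Finset.mem_range.mp ha
      omega
    · intro a ha; rfl
  have hAinj : ∀ x ∈ A, ∀ y ∈ A, N - x = N - y → x = y := by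
    intro x hx y hy hxy
    have hx' := Finset.mem_Icc.mp (hAsub hx)
    have hy' := Finset.mem_Icc.mp (hAsub hy)
    omega
  have hApow : (2:ℤ)^m - 2 ≤ ∑ i ∈ A, (2:ℤ)^(N-i) := by
    have hBsum : ∑ e ∈ A.image (fun i => N - i), (2:ℤ)^e = ∑ i ∈ A, (2:ℤ)^(N-i) :=
      Finset.sum_image hAinj
    have hBcard : (A.image (fun i => N - i)).card = m - 1 := by
      rw [Finset.card_image_of_injOn hAinj, hAcard]
    have hBpos : ∀ e ∈ A.image (fun i => N - i), 1 ≤ e := by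
      intro e he
      obtain ⟨i, hi, rfl⟩ := Finset.mem_image.mp he
      obtain ⟨h1, h2, h3⟩ := hAprop i hi
      have : k₀ ≤ N := hk₀mem.2.1
      omega
    have := pow_sum_lower (A.image (fun i => N - i)) hBpos
    rw [hBsum, hBcard] at this
    have hm1 : m - 1 + 1 = m := by omega
    rw [hm1] at this
    exact this
  -- assemble
  have hsplit : ∑ i ∈ Finset.Icc 1 N, (2:ℤ)^(N-i) * r i
      = ∑ i ∈ Finset.Icc 1 N \ A, (2:ℤ)^(N-i) * r i + ∑ i ∈ A, (2:ℤ)^(N-i) * r i :=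
    (Finset.sum_sdiff hAsub).symm
  have hsdiff : ∑ i ∈ Finset.Icc 1 N \ A, (2:ℤ)^(N-i)
      = ∑ i ∈ Finset.Icc 1 N, (2:ℤ)^(N-i) - ∑ i ∈ A, (2:ℤ)^(N-i) := by
    rw [Finset.sum_sdiff_eq_sub hAsub]
  have hbig : ∑ i ∈ Finset.Icc 1 N, (2:ℤ)^(N-i) * r i ≤ 2^N - 2^m + 1 := by
    rw [hsplit]
    have := hgeo
    linarith [hb1, hb2, hApow, hsdiff.le, hsdiff.ge]
  have hfinal : ((∑ v, f v : ℕ) : ℤ) ≤ 2^N - 2^m + 1 := by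
    have h1 : ∑ v, f v = ∑ j ∈ Finset.Ico 1 (N+1), f (u j) := by
      rw [htot, Finset.Ico_add_one_right_eq_Icc]
    rw [h1, hQ (N+1) le_rfl, hformula N hN1 le_rfl]
    exact hbig
  have hpm : (2:ℕ)^m ≤ 2^N := Nat.pow_le_pow_right (by norm_num) (by omega)
  have hcast : ((2 ^ N - 2 ^ m + 1 : ℕ) : ℤ) = 2^N - 2^m + 1 := by
    push_cast [hpm]
    ring
  omega
end
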